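/- Let (𝒳, 𝒴) be a cotorsion theory in an abelian category 𝒜. Then 𝒴 is closed under quotients if and only if for every X ∈ 𝒳, every short exact sequence Y → A ↠ X with Y ∈ 𝒴 is right split (the epimorphism A ↠ X has a section). -/

import Mathlib

open CategoryTheory Limits

universe v u

variable {𝒜 : Type u} [Category.{v} 𝒜] [Abelian 𝒜]

def rightPerp (K : Set 𝒜) : Set 𝒜 :=
  {X | ∀ ⦃A B Q : 𝒜⦄ (i : A ⟶ B) (p : B ⟶ Q) (w : i ≫ p = 0),
    (ShortComplex.mk i p w).ShortExact → Q ∈ K → ∀ g : A ⟶ X, ∃ h : B ⟶ X, i ≫ h = g}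

def leftPerp (K : Set 𝒜) : Set 𝒜 :=
  {X | ∀ ⦃A B Q : 𝒜⦄ (i : A ⟶ B) (p : B ⟶ Q) (w : i ≫ p = 0),
    (ShortComplex.mk i p w).ShortExact → A ∈ K → ∀ g : X ⟶ Q, ∃ h : X ⟶ B, h ≫ p = g}

/-- For a cotorsion theory `(𝒳, 𝒴)`, `𝒴` is closed under quotients iff for every
`X ∈ 𝒳`, every exact sequence `Y → A ↠ X` with `Y ∈ 𝒴` is right split. -/
theorem statement4 (𝒳 𝒴 : Set 𝒜)
    (hX : 𝒳 = leftPerp 𝒴) (hY : 𝒴 = rightPerp 𝒳) :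
    (∀ ⦃Y Y' : 𝒜⦄ (p : Y ⟶ Y'), Epi p → Y ∈ 𝒴 → Y' ∈ 𝒴) ↔
      (∀ ⦃Y A X : 𝒜⦄ (u : Y ⟶ A) (v : A ⟶ X) (w : u ≫ v = 0),
        (ShortComplex.mk u v w).Exact → Epi v → Y ∈ 𝒴 → X ∈ 𝒳 →
          ∃ s : X ⟶ A, s ≫ v = 𝟙 X) := by
  constructor
  · -- closed under quotients → right split
    intro hclosed Y A X u v w hex hepi hYmem hXmem
    haveI := hepi
    have hlift : Epi (kernel.lift v u w) :=
      (ShortComplex.exact_iff_epi_kernel_lift _).1 hex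
    have hK : kernel v ∈ 𝒴 := hclosed _ hlift hYmem
    have hse : (ShortComplex.mk (kernel.ι v) v (kernel.condition v)).ShortExact :=
      { exact := ShortComplex.exact_of_f_is_kernel _ (kernelIsKernel v) }
    rw [hX] at hXmem
    obtain ⟨h, hh⟩ := hXmem _ _ (kernel.condition v) hse hK (𝟙 X)
    exact ⟨h, hh⟩
  · -- right split → closed under quotients
    intro hsplit Y Y' p hp hYmem
    rw [hY]
    intro A B Q i q w hse hQ g
    haveI : Mono i := hse.mono_f
    haveI : Epi q := hse.epi_g
    haveI := hp
    -- pushout of the sequence along g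
    let P := pushout i g
    let d : P ⟶ Q := pushout.desc q 0 (by simp [w])
    have hd0 : pushout.inr i g ≫ d = 0 := by dsimp only [d]; apply pushout.inr_desc
    have hld : pushout.inl i g ≫ d = q := by dsimp only [d]; apply pushout.inl_desc
    haveI : Epi d := by
      have : Epi (pushout.inl i g ≫ d) := by rw [hld]; infer_instance
      exact epi_of_epi (pushout.inl i g) d
    -- d is a cokernel of inr
    have hcolim : IsColimit (CokernelCofork.ofπ d hd0) := by
      refine CokernelCofork.IsColimit.ofπ' _ _ (fun {T} t ht => ?_)
      refine ⟨hse.exact.desc (pushout.inl i g ≫ t) ?_, ?_⟩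
      · rw [← Category.assoc, pushout.condition, Category.assoc, ht, comp_zero]
      · apply pushout.hom_ext
        · rw [← Category.assoc, hld, hse.exact.g_desc]
        · rw [← Category.assoc, hd0, zero_comp, ht]
    have hse' : (ShortComplex.mk (pushout.inr i g) d hd0).ShortExact :=
      { exact := ShortComplex.exact_of_g_is_cokernel _ hcolim }
    -- precompose with the epi p : Y ⟶ Y'
    have w' : (p ≫ pushout.inr i g) ≫ d = 0 := by
      rw [Category.assoc, hd0, comp_zero]
    have hex' : (ShortComplex.mk (p ≫ pushout.inr i g) d w').Exact := by
      let φ : ShortComplex.mk (p ≫ pushout.inr i g) d w' ⟶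
          ShortComplex.mk (pushout.inr i g) d hd0 :=
        { τ₁ := p, τ₂ := 𝟙 _, τ₃ := 𝟙 _,
          comm₁₂ := by simp, comm₂₃ := by simp }
      haveI : Epi φ.τ₁ := hp
      haveI : IsIso φ.τ₂ := by dsimp; infer_instance
      haveI : Mono φ.τ₃ := by dsimp; infer_instance
      exact (ShortComplex.exact_iff_of_epi_of_isIso_of_mono φ).2 hse'.exact
    obtain ⟨s, hs⟩ := hsplit _ _ w' hex' ‹Epi d› hYmem hQ
    -- get a retraction from the section
    have spl := ShortComplex.Splitting.ofExactOfSection _ hse'.exact s hs hse'.mono_f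
    refine ⟨pushout.inl i g ≫ spl.r, ?_⟩
    rw [← Category.assoc, pushout.condition, Category.assoc, spl.f_r, Category.comp_id]
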